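/- Let F be the standard normal CDF. Then ∫_{-∞}^{∞} {1 - F(x)³ - (1-F(x))³} dx = 3/√π. -/

import Mathlib

open Real MeasureTheory

/-- The standard normal cumulative distribution function. -/
noncomputable def normalCDF (x : ℝ) : ℝ :=
  ∫ t in Set.Iic x, Real.exp (-t^2/2) / Real.sqrt (2*π)

open Filter Set Topology

noncomputable def npdf (x : ℝ) : ℝ := Real.exp (-x^2/2) / Real.sqrt (2*π)

lemma sqrt2pi_pos : 0 < Real.sqrt (2*π) := Real.sqrt_pos.2 (by positivity)

lemma npdf_pos (x : ℝ) : 0 < npdf x := div_pos (Real.exp_pos _) sqrt2pi_pos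

lemma npdf_neg (x : ℝ) : npdf (-x) = npdf x := by simp [npdf]

lemma npdf_eq : npdf = fun x => Real.exp (-(2⁻¹:ℝ) * x^2) * (Real.sqrt (2*π))⁻¹ := by
  funext x
  rw [npdf, div_eq_mul_inv]
  congr 2
  ring

lemma integrable_npdf : Integrable npdf := by
  rw [npdf_eq]
  exact (integrable_exp_neg_mul_sq (by norm_num)).mul_const _

lemma continuous_npdf : Continuous npdf := by
  apply Continuous.div_const
  exact Real.continuous_exp.comp (by continuity)

lemma integral_npdf : ∫ x, npdf x = 1 := by
  rw [npdf_eq]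
  rw [integral_mul_const, integral_gaussian]
  rw [show π / (2⁻¹:ℝ) = 2*π by ring]
  exact mul_inv_cancel₀ (ne_of_gt sqrt2pi_pos)

lemma integrable_mul_npdf : Integrable (fun x => x * npdf x) := by
  rw [npdf_eq]
  have := (integrable_mul_exp_neg_mul_sq (b := 2⁻¹) (by norm_num)).mul_const (Real.sqrt (2*π))⁻¹
  exact this.congr (Eventually.of_forall (fun x => by ring))

lemma hasDerivAt_npdf (x : ℝ) : HasDerivAt npdf (-x * npdf x) x := by
  rw [npdf_eq]
  have h1 : HasDerivAt (fun x : ℝ => -(2⁻¹:ℝ) * x^2) (-x) x := by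
    have := ((hasDerivAt_pow 2 x).const_mul (-(2⁻¹:ℝ)))
    exact this.congr_deriv (by norm_num; ring)
  have := ((h1.exp).mul_const (Real.sqrt (2*π))⁻¹)
  exact this.congr_deriv (by beta_reduce; ring)

lemma tendsto_npdf_top : Tendsto npdf atTop (𝓝 0) := by
  rw [npdf_eq]
  rw [show (0:ℝ) = 0 * (Real.sqrt (2*π))⁻¹ by ring]
  apply Tendsto.mul_const
  apply Real.tendsto_exp_atBot.comp
  have h : Tendsto (fun x:ℝ => (2⁻¹:ℝ)*x^2) atTop atTop :=
    (tendsto_pow_atTop (by norm_num)).const_mul_atTop (by norm_num)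
  have h2 : Tendsto (fun x:ℝ => -((2⁻¹:ℝ)*x^2)) atTop atBot := tendsto_neg_atBot_iff.2 h
  exact h2.congr (fun x => by ring)

lemma normalCDF_eq (x : ℝ) : normalCDF x = ∫ t in Iic x, npdf t := rfl

lemma hasDerivAt_normalCDF (x : ℝ) : HasDerivAt normalCDF (npdf x) x := by
  have key : normalCDF = fun u => normalCDF 0 + ∫ t in (0:ℝ)..u, npdf t := by
    funext u
    rw [normalCDF_eq, normalCDF_eq]
    rw [← intervalIntegral.integral_Iic_sub_Iic integrable_npdf.integrableOn
      integrable_npdf.integrableOn]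
    ring
  rw [key]
  exact (intervalIntegral.integral_hasDerivAt_right
    (integrable_npdf.intervalIntegrable)
    (continuous_npdf.stronglyMeasurableAtFilter _ _)
    continuous_npdf.continuousAt).const_add _

lemma continuous_normalCDF : Continuous normalCDF := by
  have : Differentiable ℝ normalCDF := fun x => (hasDerivAt_normalCDF x).differentiableAt
  exact this.continuous

lemma normalCDF_nonneg (x : ℝ) : 0 ≤ normalCDF x := by
  rw [normalCDF_eq]
  exact setIntegral_nonneg measurableSet_Iic (fun t _ => (npdf_pos t).le)

lemma normalCDF_le_one (x : ℝ) : normalCDF x ≤ 1 := by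
  rw [normalCDF_eq, ← integral_npdf]
  exact setIntegral_le_integral integrable_npdf (Eventually.of_forall (fun t => (npdf_pos t).le))

lemma normalCDF_add_neg (x : ℝ) : normalCDF x + normalCDF (-x) = 1 := by
  have h1 : normalCDF (-x) = ∫ t in Ioi x, npdf t := by
    rw [normalCDF_eq]
    have := integral_comp_neg_Iic (-x) npdf
    simp only [npdf_neg, neg_neg] at this
    rw [← this]
  rw [normalCDF_eq, h1,
    intervalIntegral.integral_Iic_add_Ioi integrable_npdf.integrableOn
      integrable_npdf.integrableOn, integral_npdf]

lemma tendsto_normalCDF_top : Tendsto normalCDF atTop (𝓝 1) := by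
  have := (MeasureTheory.aecover_Iic (μ := volume) (b := fun x : ℝ => x)
    tendsto_id).integral_tendsto_of_countably_generated integrable_npdf
  rw [integral_npdf] at this
  exact this

lemma tendsto_normalCDF_bot : Tendsto normalCDF atBot (𝓝 0) := by
  have h : ∀ x, normalCDF x = 1 - normalCDF (-x) := fun x => by
    have := normalCDF_add_neg x; linarith
  have : Tendsto (fun x => 1 - normalCDF (-x)) atBot (𝓝 0) := by
    have := tendsto_normalCDF_top.comp tendsto_neg_atBot_atTop
    simpa using (tendsto_const_nhds (x := (1:ℝ))).sub this
  exact this.congr (fun x => (h x).symm)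

lemma tendsto_npdf_bot : Tendsto npdf atBot (𝓝 0) := by
  have := tendsto_npdf_top.comp tendsto_neg_atBot_atTop
  exact this.congr (fun x => npdf_neg x)

lemma integral_Iic_neg_mul_npdf (y : ℝ) : ∫ t in Iic y, -t * npdf t = npdf y := by
  have := MeasureTheory.integral_Iic_of_hasDerivAt_of_tendsto'
    (f := npdf) (f' := fun t => -t * npdf t) (a := y)
    (fun t _ => hasDerivAt_npdf t)
    (integrable_mul_npdf.neg.congr (Eventually.of_forall (fun t => by simp only [Pi.neg_apply]; ring))).integrableOn
    tendsto_npdf_bot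
  simpa using this

lemma normalCDF_neg_le {x : ℝ} (hx : 1 ≤ x) : normalCDF (-x) ≤ npdf x := by
  have key := integral_Iic_neg_mul_npdf (-x)
  rw [npdf_neg] at key
  rw [normalCDF_eq, ← key]
  apply setIntegral_mono_on integrable_npdf.integrableOn
    ((integrable_mul_npdf.neg.congr (Eventually.of_forall
      (fun t => by simp only [Pi.neg_apply]; ring))).integrableOn)
    measurableSet_Iic
  intro t ht
  have h1 : 1 ≤ -t := by simp only [mem_Iic] at ht; linarith
  nlinarith [npdf_pos t]

lemma FF_le_aux {x : ℝ} (hx : 1 ≤ x) : normalCDF x * normalCDF (-x) ≤ npdf x :=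
  calc normalCDF x * normalCDF (-x) ≤ 1 * normalCDF (-x) := by
        apply mul_le_mul_of_nonneg_right (normalCDF_le_one x) (normalCDF_nonneg _)
    _ = normalCDF (-x) := one_mul _
    _ ≤ npdf x := normalCDF_neg_le hx

lemma FF_le (x : ℝ) : normalCDF x * normalCDF (-x) ≤ 2 * npdf x := by
  rcases le_or_gt 1 (|x|) with h | h
  · rcases abs_cases x with ⟨he, _⟩ | ⟨he, _⟩
    · rw [he] at h
      linarith [FF_le_aux h, npdf_pos x]
    · rw [he] at h
      have := FF_le_aux h
      rw [neg_neg, npdf_neg] at this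
      linarith [npdf_pos x]
  · have h1 : normalCDF x * normalCDF (-x) ≤ 4⁻¹ := by
      nlinarith [normalCDF_add_neg x, sq_nonneg (normalCDF x - normalCDF (-x))]
    have hx2 : x^2 ≤ 1 := by nlinarith [abs_nonneg x, sq_abs x]
    have hexp12 : Real.exp (2⁻¹ : ℝ) ≤ 2 := by
      have h2 : Real.exp (2⁻¹ : ℝ) * Real.exp (2⁻¹ : ℝ) = Real.exp 1 := by
        rw [← Real.exp_add]; norm_num
      nlinarith [Real.exp_pos (2⁻¹ : ℝ), Real.exp_one_lt_d9]
    have he : (2⁻¹ : ℝ) ≤ Real.exp (-x^2/2) := by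
      have h3 : Real.exp (-(2⁻¹:ℝ)) ≤ Real.exp (-x^2/2) :=
        Real.exp_le_exp.2 (by linarith)
      rw [Real.exp_neg] at h3
      have h4 : (2⁻¹ : ℝ) ≤ (Real.exp (2⁻¹:ℝ))⁻¹ := by
        rw [le_inv_comm₀] <;> [skip; norm_num; exact Real.exp_pos _] <;> linarith
      linarith
    have hs : Real.sqrt (2*π) ≤ 3 := by
      rw [show (3:ℝ) = Real.sqrt 9 by
        rw [show (9:ℝ) = 3^2 by norm_num, Real.sqrt_sq]; norm_num]
      exact Real.sqrt_le_sqrt (by nlinarith [Real.pi_lt_d2])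
    have h2 : (6⁻¹ : ℝ) ≤ npdf x := by
      rw [npdf, show (6⁻¹:ℝ) = 2⁻¹ / 3 by norm_num]
      exact div_le_div₀ (by positivity) he sqrt2pi_pos hs

    linarith

lemma continuous_FF : Continuous (fun x => normalCDF x * normalCDF (-x)) :=
  continuous_normalCDF.mul (continuous_normalCDF.comp continuous_neg)

lemma integrable_FF : Integrable (fun x => normalCDF x * normalCDF (-x)) := by
  apply Integrable.mono (integrable_npdf.const_mul 2) continuous_FF.aestronglyMeasurable
  apply Eventually.of_forall
  intro x
  rw [Real.norm_eq_abs, Real.norm_eq_abs,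
    abs_of_nonneg (mul_nonneg (normalCDF_nonneg x) (normalCDF_nonneg (-x))),
    abs_of_nonneg (mul_nonneg (by norm_num) (npdf_pos x).le)]
  exact FF_le x

lemma tendsto_mul_npdf_top : Tendsto (fun x => x * npdf x) atTop (𝓝 0) := by
  have h := (rpow_mul_exp_neg_mul_sq_isLittleO_exp_neg (b := 2⁻¹) (by norm_num) 1).trans_tendsto
    (Real.tendsto_exp_atBot.comp (by
      have : Tendsto (fun x:ℝ => -(2⁻¹ * x)) atTop atBot :=
        tendsto_neg_atBot_iff.2 (tendsto_id.const_mul_atTop (by norm_num))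
      exact this.congr (fun x => by ring)))
  have h2 := h.mul_const ((Real.sqrt (2*π))⁻¹)
  rw [zero_mul] at h2
  apply h2.congr'
  filter_upwards [eventually_gt_atTop (0:ℝ)] with x hx
  rw [Real.rpow_one]
  rw [npdf_eq]
  ring

lemma tendsto_x_cdf_top : Tendsto (fun x => (x : ℝ) * normalCDF (-x)) atTop (𝓝 0) := by
  apply squeeze_zero' ?_ ?_ tendsto_mul_npdf_top
  · filter_upwards [eventually_ge_atTop (0:ℝ)] with x hx
    exact mul_nonneg hx (normalCDF_nonneg _)
  · filter_upwards [eventually_ge_atTop (1:ℝ)] with x hx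
    exact mul_le_mul_of_nonneg_left (normalCDF_neg_le hx) (by linarith)

noncomputable def Hfun (x : ℝ) : ℝ :=
  x * (normalCDF x * normalCDF (-x)) - npdf x * (normalCDF x - normalCDF (-x))
    + normalCDF (Real.sqrt 2 * x) / Real.sqrt π

lemma npdf_sqrt_two (x : ℝ) :
    npdf (Real.sqrt 2 * x) * Real.sqrt 2 / Real.sqrt π = 2 * npdf x ^ 2 := by
  rw [npdf, npdf]
  rw [show (Real.sqrt 2 * x)^2 = 2 * x^2 by
    rw [mul_pow, Real.sq_sqrt (by norm_num : (0:ℝ) ≤ 2)]]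
  rw [Real.sqrt_mul (by norm_num : (0:ℝ) ≤ 2) π]
  have hπ : Real.sqrt π * Real.sqrt π = π := Real.mul_self_sqrt Real.pi_pos.le
  have h2 : Real.sqrt 2 * Real.sqrt 2 = 2 := Real.mul_self_sqrt (by norm_num)
  have ha : Real.exp (-(2*x^2)/2) = Real.exp (-x^2/2) ^ 2 := by
    rw [← Real.exp_nat_mul]
    congr 1
    push_cast
    ring
  rw [ha]
  have hπ0 : Real.sqrt π ≠ 0 := by positivity
  have h20 : Real.sqrt 2 ≠ 0 := by positivity
  have h3 : (Real.sqrt 2 * Real.sqrt π)^2 = 2*π := by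
    rw [mul_pow]; rw [sq, sq, h2, hπ]
  field_simp
  exact Real.sq_sqrt (by norm_num)

lemma hasDerivAt_H (x : ℝ) : HasDerivAt Hfun (normalCDF x * normalCDF (-x)) x := by
  have hF := hasDerivAt_normalCDF x
  have hFn : HasDerivAt (fun y => normalCDF (-y)) (-npdf x) x := by
    have h := (hasDerivAt_normalCDF (-x)).comp x (hasDerivAt_neg x)
    simp [npdf_neg] at h; exact h
  have hnp := hasDerivAt_npdf x
  have hs : HasDerivAt (fun y => normalCDF (Real.sqrt 2 * y))
      (npdf (Real.sqrt 2 * x) * Real.sqrt 2) x := by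
    have h := (hasDerivAt_normalCDF (Real.sqrt 2 * x)).comp x
      ((hasDerivAt_id x).const_mul (Real.sqrt 2))
    simp at h; exact h
  have H1 : HasDerivAt (fun y => y * (normalCDF y * normalCDF (-y)))
      (normalCDF x * normalCDF (-x)
        + x * (npdf x * normalCDF (-x) + normalCDF x * (-npdf x))) x := by
    have := (hasDerivAt_id x).mul (hF.mul hFn)
    simp at this ⊢; exact this
  have H2 : HasDerivAt (fun y => npdf y * (normalCDF y - normalCDF (-y)))
      ((-x * npdf x) * (normalCDF x - normalCDF (-x)) + npdf x * (npdf x - -npdf x)) x :=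
    hnp.mul (hF.sub hFn)
  have H3 : HasDerivAt (fun y => normalCDF (Real.sqrt 2 * y) / Real.sqrt π)
      (npdf (Real.sqrt 2 * x) * Real.sqrt 2 / Real.sqrt π) x := hs.div_const _
  have := (H1.sub H2).add H3
  have goal : HasDerivAt Hfun
      ((normalCDF x * normalCDF (-x)
        + x * (npdf x * normalCDF (-x) + normalCDF x * (-npdf x)))
        - ((-x * npdf x) * (normalCDF x - normalCDF (-x)) + npdf x * (npdf x - -npdf x))
        + npdf (Real.sqrt 2 * x) * Real.sqrt 2 / Real.sqrt π) x := this
  convert goal using 1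
  rw [npdf_sqrt_two]
  ring

lemma H_add (x : ℝ) : Hfun x + Hfun (-x) = 1 / Real.sqrt π := by
  have h := normalCDF_add_neg (Real.sqrt 2 * x)
  simp only [Hfun, neg_neg, npdf_neg, show Real.sqrt 2 * -x = -(Real.sqrt 2 * x) by ring]
  linear_combination h / Real.sqrt π

lemma tendsto_H_top : Tendsto Hfun atTop (𝓝 (1/Real.sqrt π)) := by
  have t1 : Tendsto (fun x => x * (normalCDF x * normalCDF (-x))) atTop (𝓝 0) := by
    have h := tendsto_x_cdf_top.mul tendsto_normalCDF_top
    rw [zero_mul] at h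
    exact h.congr (fun x => by ring)
  have hFn0 : Tendsto (fun x => normalCDF (-x)) atTop (𝓝 0) :=
    tendsto_normalCDF_bot.comp tendsto_neg_atTop_atBot
  have t2 : Tendsto (fun x => npdf x * (normalCDF x - normalCDF (-x))) atTop (𝓝 0) := by
    have h := tendsto_npdf_top.mul (tendsto_normalCDF_top.sub hFn0)
    simpa using h
  have t3 : Tendsto (fun x => normalCDF (Real.sqrt 2 * x) / Real.sqrt π) atTop
      (𝓝 (1/Real.sqrt π)) := by
    have hcomp : Tendsto (fun x:ℝ => Real.sqrt 2 * x) atTop atTop :=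
      tendsto_id.const_mul_atTop (Real.sqrt_pos.2 two_pos)
    exact (tendsto_normalCDF_top.comp hcomp).div_const (Real.sqrt π)
  have h := (t1.sub t2).add t3
  simp at h ⊢; exact h

lemma tendsto_H_bot : Tendsto Hfun atBot (𝓝 0) := by
  have h : ∀ x, Hfun x = 1/Real.sqrt π - Hfun (-x) := fun x => by linarith [H_add x]
  have h2 : Tendsto (fun x => 1/Real.sqrt π - Hfun (-x)) atBot (𝓝 0) := by
    have h3 := tendsto_H_top.comp tendsto_neg_atBot_atTop
    simpa using (tendsto_const_nhds (x := 1/Real.sqrt π)).sub h3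
  exact h2.congr (fun x => (h x).symm)

/-- `∫ 1 - F(x)³ - (1-F(x))³ dx = 3/√π`. -/
theorem stmt2 :
    ∫ x : ℝ, (1 - (normalCDF x)^3 - (1 - normalCDF x)^3) = 3 / Real.sqrt π := by
  have key : ∫ x : ℝ, normalCDF x * normalCDF (-x) = 1 / Real.sqrt π - 0 :=
    MeasureTheory.integral_of_hasDerivAt_of_tendsto hasDerivAt_H integrable_FF
      tendsto_H_bot tendsto_H_top
  have heq : (fun x : ℝ => (1 - (normalCDF x)^3 - (1 - normalCDF x)^3))
      = fun x => 3 * (normalCDF x * normalCDF (-x)) := by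
    funext x
    have h := normalCDF_add_neg x
    have hb : normalCDF (-x) = 1 - normalCDF x := by linarith
    rw [hb]; ring
  rw [heq, integral_const_mul, key, sub_zero]
  ring
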